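/- Let F ∈ 𝓕 and s > 0. Then the Hölder space C^s(ℝ²) embeds continuously into LMO_F: there exists C > 0 such that ‖f‖_{LMO_F} ≤ C‖f‖_{C^s} for all f ∈ C^s. -/

import Mathlib

open MeasureTheory Metric Real Filter Topology

noncomputable section

/-- The plane `ℝ²`. -/
abbrev Plane := EuclideanSpace ℝ (Fin 2)

/-- Average of `f` over the ball `B(c,r)` (with respect to Lebesgue measure). -/
def ballAvg (f : Plane → ℝ) (c : Plane) (r : ℝ) : ℝ := ⨍ y in ball c r, f y

/-- `K` is a bound for all mean oscillations of `f` (i.e. `‖f‖_BMO ≤ K`). -/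
def OscBound (f : Plane → ℝ) (K : ℝ) : Prop :=
  ∀ c r, 0 < r → (⨍ y in ball c r, |f y - ballAvg f c r|) ≤ K

/-- The `BMO` seminorm of `f`, as a supremum of mean oscillations. -/
def bmoNorm (f : Plane → ℝ) : ℝ :=
  sSup {m | ∃ c r, 0 < r ∧ m = ⨍ y in ball c r, |f y - ballAvg f c r|}

/-- `K` bounds the second (weighted pair of balls) part of the `BMO_F` norm of `f`. -/
def PairBoundF (F : ℝ → ℝ) (f : Plane → ℝ) (K : ℝ) : Prop :=
  ∀ c₁ r₁ c₂ r₂, 0 < r₂ → 0 < r₁ → r₁ ≤ 1 → ball c₂ (2 * r₂) ⊆ ball c₁ r₁ →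
    |ballAvg f c₂ r₂ - ballAvg f c₁ r₁| ≤ K * F ((1 - Real.log r₂) / (1 - Real.log r₁))

/-- The `BMO_F` norm of `f`. -/
def bmoFNorm (F : ℝ → ℝ) (f : Plane → ℝ) : ℝ :=
  bmoNorm f +
    sSup {m | ∃ c₁ r₁ c₂ r₂, 0 < r₂ ∧ 0 < r₁ ∧ r₁ ≤ 1 ∧ ball c₂ (2 * r₂) ⊆ ball c₁ r₁ ∧
      m = |ballAvg f c₂ r₂ - ballAvg f c₁ r₁| / F ((1 - Real.log r₂) / (1 - Real.log r₁))}

/-- Membership in the space `BMO_F`. -/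
def MemBMOF (F : ℝ → ℝ) (f : Plane → ℝ) : Prop :=
  LocallyIntegrable f volume ∧ ∃ K, OscBound f K ∧ PairBoundF F f K

/-- The `LMO_F` norm of `f`. -/
def lmoFNorm (F : ℝ → ℝ) (f : Plane → ℝ) : ℝ :=
  sSup {m | ∃ c r, 0 < r ∧ r ≤ 1 ∧
      m = F (1 - Real.log r) * ⨍ y in ball c r, |f y - ballAvg f c r|} +
  sSup {m | ∃ c₁ r₁ c₂ r₂, 0 < r₂ ∧ 0 < r₁ ∧ r₁ ≤ 1 ∧ ball c₂ (2 * r₂) ⊆ ball c₁ r₁ ∧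
      m = F (1 - Real.log r₁) * |ballAvg f c₂ r₂ - ballAvg f c₁ r₁|}

/-- Membership in the space `LMO_F`. -/
def MemLMOF (F : ℝ → ℝ) (f : Plane → ℝ) : Prop :=
  LocallyIntegrable f volume ∧ ∃ K,
    (∀ c r, 0 < r → r ≤ 1 →
      F (1 - Real.log r) * ⨍ y in ball c r, |f y - ballAvg f c r| ≤ K) ∧
    (∀ c₁ r₁ c₂ r₂, 0 < r₂ → 0 < r₁ → r₁ ≤ 1 → ball c₂ (2 * r₂) ⊆ ball c₁ r₁ →
      F (1 - Real.log r₁) * |ballAvg f c₂ r₂ - ballAvg f c₁ r₁| ≤ K)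

/-- The `L^∞` norm. -/
def supNorm (f : Plane → ℝ) : ℝ := (eLpNorm f ⊤ volume).toReal

/-- The `L^p` norm for a real exponent `p`. -/
def lpNorm (p : ℝ) (f : Plane → ℝ) : ℝ := (eLpNorm f (ENNReal.ofReal p) volume).toReal

/-- The class `𝓕` of admissible weight functions: nondecreasing on `[1,∞)`, `≥ 1` there,
blowing up at infinity, with the exponential-integral decay condition and submultiplicativity. -/
def ClassF (F : ℝ → ℝ) : Prop :=
  (∀ x, 1 ≤ x → 1 ≤ F x) ∧ (∀ x y, 1 ≤ x → x ≤ y → F x ≤ F y) ∧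
  Tendsto F atTop atTop ∧
  ∃ C, 0 < C ∧
    (∀ l x, 1 ≤ l → l ≤ x →
      (∫ y in Set.Ici x, Real.exp (-y / l) * F y) ≤ C * l * Real.exp (-x / l) * F x) ∧
    (∀ x y, 1 ≤ x → 1 ≤ y → F (x * y) ≤ C * F x * F y)

end

/-- For `F ∈ 𝓕` and `0 < s < 1`, the Hölder space `C^s(ℝ²)` embeds
continuously into `LMO_F`: `‖f‖_{LMO_F} ≤ C ‖f‖_{C^s} = C(‖f‖_∞ + [f]_{C^s})`. -/
lemma classF_poly (F : ℝ → ℝ) (hF : ClassF F) :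
    ∃ D : ℝ, 1 ≤ D ∧ ∀ n : ℕ, ∀ x : ℝ, 1 ≤ x → x ≤ 2 ^ n → F x ≤ D ^ (n + 1) := by
  obtain ⟨h1, hmono, -, C, hC, -, hsub⟩ := hF
  refine ⟨max 1 (max (F 2) (C * F 2)), le_max_left _ _, ?_⟩
  set D := max 1 (max (F 2) (C * F 2)) with hD
  have hD1 : (1:ℝ) ≤ D := le_max_left _ _
  have hF2D : F 2 ≤ D := le_trans (le_max_left _ _) (le_max_right _ _)
  have hCF2D : C * F 2 ≤ D := le_trans (le_max_right _ _) (le_max_right _ _)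
  intro n
  induction n with
  | zero =>
    intro x hx1 hx2
    norm_num at hx2
    have hx : x = 1 := le_antisymm hx2 hx1
    subst hx
    calc F 1 ≤ F 2 := hmono 1 2 le_rfl (by norm_num)
      _ ≤ D := hF2D
      _ = D ^ (0 + 1) := (pow_one D).symm
  | succ n ih =>
    intro x hx1 hx2
    by_cases h2 : x ≤ 2
    · calc F x ≤ F 2 := hmono x 2 hx1 h2
        _ ≤ D := hF2D
        _ ≤ D ^ (n + 1 + 1) := le_self_pow₀ hD1 (by omega)
    · push_neg at h2
      have hx2' : (1:ℝ) ≤ x / 2 := by linarith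
      have hx2'' : x / 2 ≤ 2 ^ n := by
        rw [div_le_iff₀ (by norm_num : (0:ℝ) < 2)]
        calc x ≤ 2 ^ (n + 1) := hx2
          _ = 2 ^ n * 2 := by ring
      have hs := hsub 2 (x / 2) (by norm_num) hx2'
      rw [show (2:ℝ) * (x / 2) = x by ring] at hs
      calc F x ≤ C * F 2 * F (x / 2) := hs
        _ ≤ D * D ^ (n + 1) :=
            mul_le_mul hCF2D (ih _ hx2' hx2'')
              (le_trans zero_le_one (h1 _ hx2')) (le_trans zero_le_one hD1)
        _ = D ^ (n + 1 + 1) := (pow_succ' D (n + 1)).symm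

lemma classF_decay (F : ℝ → ℝ) (hF : ClassF F) {s : ℝ} (hs : 0 < s) :
    ∃ K : ℝ, 0 < K ∧ ∀ x : ℝ, 1 ≤ x → F x * Real.exp (-(s * x)) ≤ K := by
  obtain ⟨D, hD1, hD⟩ := classF_poly F hF
  have hD0 : (0:ℝ) < D := lt_of_lt_of_le one_pos hD1
  set β := Real.logb 2 D with hβ
  set b : ℕ → ℝ := fun n => D * (((2:ℝ) ^ n) ^ β * Real.exp (-(s / 4) * 2 ^ n)) with hb
  have hpow : ∀ n : ℕ, ((2:ℝ) ^ n) ^ β = D ^ n := by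
    intro n
    rw [← Real.rpow_natCast 2 n, ← Real.rpow_mul (by norm_num), mul_comm,
      Real.rpow_mul (by norm_num), Real.rpow_logb (by norm_num) (by norm_num) hD0,
      Real.rpow_natCast]
  have hbt : Tendsto b atTop (𝓝 0) := by
    have h1 : Tendsto (fun t : ℝ => t ^ β * Real.exp (-(s / 4) * t)) atTop (𝓝 0) :=
      tendsto_rpow_mul_exp_neg_mul_atTop_nhds_zero β (s / 4) (by linarith)
    have h2 : Tendsto (fun n : ℕ => (2:ℝ) ^ n) atTop atTop :=
      tendsto_pow_atTop_atTop_of_one_lt (by norm_num)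
    have h3 := (h1.comp h2).const_mul D
    rw [mul_zero] at h3
    exact h3
  obtain ⟨K0, hK0⟩ := hbt.bddAbove_range
  refine ⟨max K0 1, lt_of_lt_of_le one_pos (le_max_right _ _), ?_⟩
  intro x hx1
  obtain ⟨n, hn⟩ : ∃ n : ℕ, n = Nat.clog 2 ⌈x⌉₊ := ⟨_, rfl⟩
  have hxle : x ≤ (2:ℝ) ^ n := by
    have h2 : (⌈x⌉₊ : ℕ) ≤ 2 ^ n := by rw [hn]; exact Nat.le_pow_clog (by norm_num) _
    calc x ≤ (⌈x⌉₊ : ℝ) := Nat.le_ceil x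
      _ ≤ ((2 ^ n : ℕ) : ℝ) := by exact_mod_cast h2
      _ = (2:ℝ) ^ n := by push_cast; ring
  have hlow : (2:ℝ) ^ n / 4 ≤ x := by
    rcases Nat.eq_zero_or_pos n with h0 | hpos
    · rw [h0]; norm_num; linarith
    · have hce : 1 < ⌈x⌉₊ := by
        by_contra hc
        push_neg at hc
        have h0 : Nat.clog 2 ⌈x⌉₊ = 0 := Nat.clog_of_right_le_one hc 2
        omega
      have h3 : (2:ℕ) ^ (n - 1) < ⌈x⌉₊ := by
        rw [hn]; exact Nat.pow_pred_clog_lt_self (by norm_num) hce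
      have h4 : ((2:ℝ)) ^ (n - 1) < (⌈x⌉₊ : ℝ) := by exact_mod_cast h3
      have h5 : (⌈x⌉₊ : ℝ) < x + 1 := Nat.ceil_lt_add_one (by linarith)
      have h6 : (2:ℝ) ^ n = 2 * 2 ^ (n - 1) := by
        conv_lhs => rw [← Nat.succ_pred_eq_of_pos hpos]
        rw [pow_succ']; rfl
      rw [h6]
      nlinarith
  have hFx : F x ≤ D ^ (n + 1) := hD n x hx1 hxle
  have hexp : Real.exp (-(s * x)) ≤ Real.exp (-(s / 4) * 2 ^ n) := by
    apply Real.exp_le_exp.2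
    nlinarith
  have hF1 : (0:ℝ) ≤ F x := by
    have := hF.1 x hx1; linarith
  calc F x * Real.exp (-(s * x)) ≤ D ^ (n + 1) * Real.exp (-(s / 4) * 2 ^ n) :=
        mul_le_mul hFx hexp (Real.exp_pos _).le (by positivity)
    _ = b n := by simp only [hb]; rw [hpow n, pow_succ' D n]; ring
    _ ≤ K0 := hK0 ⟨n, rfl⟩
    _ ≤ max K0 1 := le_max_left _ _

lemma avg_close (g : Plane → ℝ) (c : Plane) (r : ℝ) (hr : 0 < r)
    (hint : IntegrableOn g (ball c r) volume) (a Q : ℝ)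
    (hb : ∀ z ∈ ball c r, |g z - a| ≤ Q) :
    |(⨍ y in ball c r, g y) - a| ≤ Q := by
  set B := ball c r with hB
  have hBpos : 0 < volume B := measure_ball_pos volume c hr
  have hBfin : volume B < ⊤ := measure_ball_lt_top
  set v := (volume B).toReal with hv
  have hv0 : 0 < v := ENNReal.toReal_pos hBpos.ne' hBfin.ne
  have hconst : IntegrableOn (fun _ : Plane => a) B volume :=
    integrableOn_const hBfin.ne
  have hint' : IntegrableOn (fun z => g z - a) B volume := hint.sub hconst
  have key : ‖∫ z in B, (g z - a)‖ ≤ Q * v :=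
    norm_setIntegral_le_of_norm_le_const (f := fun z => g z - a) hBfin
      (fun z hz => by simpa [Real.norm_eq_abs] using hb z hz)
  have hsplit : ∫ z in B, (g z - a) = (∫ z in B, g z) - v * a := by
    rw [integral_sub hint hconst, setIntegral_const, smul_eq_mul]
    rfl
  have havg : (⨍ y in B, g y) - a = v⁻¹ * ∫ z in B, (g z - a) := by
    rw [setAverage_eq, hsplit, measureReal_def, ← hv, smul_eq_mul]
    field_simp
  rw [havg, abs_mul, abs_inv, abs_of_pos hv0]
  rw [Real.norm_eq_abs] at key
  calc v⁻¹ * |∫ z in B, (g z - a)| ≤ v⁻¹ * (Q * v) := by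
        exact mul_le_mul_of_nonneg_left key (inv_nonneg.2 hv0.le)
    _ = Q := by field_simp

theorem holder_embeds_lmoF (F : ℝ → ℝ) (hF : ClassF F)
    (s : ℝ) (hs : 0 < s) (hs1 : s < 1) :
    ∃ C : ℝ, 0 < C ∧
      ∀ (f : Plane → ℝ) (M H : ℝ), Measurable f →
        (∀ x, |f x| ≤ M) →
        (∀ x y : Plane, |f x - f y| ≤ H * ‖x - y‖ ^ s) →
        MemLMOF F f ∧ lmoFNorm F f ≤ C * (M + H) := by
  obtain ⟨K, hK, hKbd⟩ := classF_decay F hF hs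
  have h1F : ∀ x, 1 ≤ x → 1 ≤ F x := hF.1
  refine ⟨6 * Real.exp 1 * K, by positivity, ?_⟩
  intro f M H hf hM hHol
  -- nonnegativity of M and H
  have hM0 : 0 ≤ M := le_trans (abs_nonneg _) (hM 0)
  have hH0 : 0 ≤ H := by
    obtain ⟨y, hy⟩ := exists_ne (0 : Plane)
    have hny : (0:ℝ) < ‖(0:Plane) - y‖ := by
      rw [zero_sub, norm_neg]
      exact norm_pos_iff.2 hy
    have ht : (0:ℝ) < ‖(0:Plane) - y‖ ^ s := Real.rpow_pos_of_pos hny s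
    by_contra h
    push_neg at h
    have h1 := (abs_nonneg (f 0 - f y)).trans (hHol 0 y)
    nlinarith
  -- integrability
  have hIntOn : ∀ c : Plane, ∀ r : ℝ, IntegrableOn f (ball c r) volume := fun c r =>
    Measure.integrableOn_of_bounded measure_ball_lt_top.ne hf.aestronglyMeasurable
      (Eventually.of_forall fun y => by simpa [Real.norm_eq_abs] using hM y)
  have hLoc : LocallyIntegrable f volume := fun x =>
    ⟨ball x 1, ball_mem_nhds x one_pos, hIntOn x 1⟩
  -- oscillation bound
  have hosc : ∀ c r, 0 < r →
      (⨍ y in ball c r, |f y - ballAvg f c r|) ≤ H * (2 * r) ^ s := by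
    intro c r hr
    set A := ballAvg f c r with hA
    have hptw : ∀ y ∈ ball c r, |A - f y| ≤ H * (2 * r) ^ s := by
      intro y hy
      refine avg_close f c r hr (hIntOn c r) (f y) _ ?_
      intro z hz
      have hd : ‖z - y‖ ≤ 2 * r := by
        rw [← dist_eq_norm]
        have := dist_triangle z c y
        rw [mem_ball] at hy hz
        rw [dist_comm y c] at hy
        linarith
      calc |f z - f y| ≤ H * ‖z - y‖ ^ s := hHol z y
        _ ≤ H * (2 * r) ^ s :=
            mul_le_mul_of_nonneg_left
              (Real.rpow_le_rpow (norm_nonneg _) hd hs.le) hH0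
    have hgint : IntegrableOn (fun y => |f y - A|) (ball c r) volume :=
      ((hIntOn c r).sub (integrableOn_const measure_ball_lt_top.ne)).abs
    have := avg_close (fun y => |f y - A|) c r hr hgint 0 (H * (2 * r) ^ s)
      (fun z hz => by
        rw [sub_zero, abs_abs, abs_sub_comm]
        exact hptw z hz)
    rw [sub_zero] at this
    exact le_trans (le_abs_self _) this
  -- pair bound
  have hpair : ∀ (c₁ : Plane) (r₁ : ℝ) (c₂ : Plane) (r₂ : ℝ), 0 < r₂ → 0 < r₁ →
      ball c₂ (2 * r₂) ⊆ ball c₁ r₁ →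
      |ballAvg f c₂ r₂ - ballAvg f c₁ r₁| ≤ 2 * (H * (2 * r₁) ^ s) := by
    intro c₁ r₁ c₂ r₂ hr₂ hr₁ hsub
    have hc₂ : c₂ ∈ ball c₁ r₁ := hsub (mem_ball_self (by linarith))
    have hbound : ∀ z ∈ ball c₁ r₁, |f z - f c₂| ≤ H * (2 * r₁) ^ s := by
      intro z hz
      have hd : ‖z - c₂‖ ≤ 2 * r₁ := by
        rw [← dist_eq_norm]
        have := dist_triangle z c₁ c₂
        rw [mem_ball] at hz hc₂
        rw [dist_comm c₂ c₁] at hc₂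
        linarith
      calc |f z - f c₂| ≤ H * ‖z - c₂‖ ^ s := hHol z c₂
        _ ≤ H * (2 * r₁) ^ s :=
            mul_le_mul_of_nonneg_left
              (Real.rpow_le_rpow (norm_nonneg _) hd hs.le) hH0
    have h2 : |ballAvg f c₂ r₂ - f c₂| ≤ H * (2 * r₁) ^ s := by
      refine avg_close f c₂ r₂ hr₂ (hIntOn c₂ r₂) (f c₂) _ ?_
      intro z hz
      exact hbound z (hsub (ball_subset_ball (by linarith) hz))
    have h1 : |ballAvg f c₁ r₁ - f c₂| ≤ H * (2 * r₁) ^ s :=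
      avg_close f c₁ r₁ hr₁ (hIntOn c₁ r₁) (f c₂) _ hbound
    calc |ballAvg f c₂ r₂ - ballAvg f c₁ r₁|
        ≤ |ballAvg f c₂ r₂ - f c₂| + |f c₂ - ballAvg f c₁ r₁| := abs_sub_le _ _ _
      _ ≤ H * (2 * r₁) ^ s + H * (2 * r₁) ^ s := by
          rw [abs_sub_comm (f c₂)]
          exact add_le_add h2 h1
      _ = 2 * (H * (2 * r₁) ^ s) := by ring
  -- weight bound
  have hFr : ∀ r : ℝ, 0 < r → r ≤ 1 →
      F (1 - Real.log r) * (2 * r) ^ s ≤ 2 * Real.exp 1 * K := by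
    intro r hr hr1
    set x := 1 - Real.log r with hx
    have hx1 : 1 ≤ x := by
      have := Real.log_nonpos hr.le hr1
      rw [hx]; linarith
    have hrs : r ^ s = Real.exp s * Real.exp (-(s * x)) := by
      rw [Real.rpow_def_of_pos hr, ← Real.exp_add]
      congr 1
      have : Real.log r = 1 - x := by rw [hx]; ring
      rw [this]; ring
    have h2s : (2:ℝ) ^ s ≤ 2 := by
      calc (2:ℝ) ^ s ≤ (2:ℝ) ^ (1:ℝ) :=
            Real.rpow_le_rpow_of_exponent_le one_le_two hs1.le
        _ = 2 := Real.rpow_one 2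
    have h2s0 : (0:ℝ) < (2:ℝ) ^ s := Real.rpow_pos_of_pos two_pos s
    have hes : Real.exp s ≤ Real.exp 1 := Real.exp_le_exp.2 hs1.le
    have hFxK : F x * Real.exp (-(s * x)) ≤ K := hKbd x hx1
    have hFx0 : (0:ℝ) ≤ F x := by have := h1F x hx1; linarith
    have hmul : ((2:ℝ) ^ s * Real.exp s) * (F x * Real.exp (-(s * x)))
        ≤ (2 * Real.exp 1) * K :=
      mul_le_mul (mul_le_mul h2s hes (Real.exp_pos s).le (by norm_num))
        hFxK (by positivity) (by positivity)
    calc F x * (2 * r) ^ s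
        = F x * ((2:ℝ) ^ s * r ^ s) := by
          rw [Real.mul_rpow (by norm_num) hr.le]
      _ = ((2:ℝ) ^ s * Real.exp s) * (F x * Real.exp (-(s * x))) := by
          rw [hrs]; ring
      _ ≤ (2 * Real.exp 1) * K := hmul
      _ = 2 * Real.exp 1 * K := by ring
  -- element bounds
  have hElem1 : ∀ c r, 0 < r → r ≤ 1 →
      F (1 - Real.log r) * ⨍ y in ball c r, |f y - ballAvg f c r|
        ≤ 2 * Real.exp 1 * K * H := by
    intro c r hr hr1
    have hFx0 : (0:ℝ) ≤ F (1 - Real.log r) := by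
      have := h1F (1 - Real.log r) (by
        have := Real.log_nonpos hr.le hr1; linarith)
      linarith
    calc F (1 - Real.log r) * ⨍ y in ball c r, |f y - ballAvg f c r|
        ≤ F (1 - Real.log r) * (H * (2 * r) ^ s) :=
          mul_le_mul_of_nonneg_left (hosc c r hr) hFx0
      _ = H * (F (1 - Real.log r) * (2 * r) ^ s) := by ring
      _ ≤ H * (2 * Real.exp 1 * K) :=
          mul_le_mul_of_nonneg_left (hFr r hr hr1) hH0
      _ = 2 * Real.exp 1 * K * H := by ring
  have hElem2 : ∀ (c₁ : Plane) (r₁ : ℝ) (c₂ : Plane) (r₂ : ℝ),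
      0 < r₂ → 0 < r₁ → r₁ ≤ 1 → ball c₂ (2 * r₂) ⊆ ball c₁ r₁ →
      F (1 - Real.log r₁) * |ballAvg f c₂ r₂ - ballAvg f c₁ r₁|
        ≤ 4 * Real.exp 1 * K * H := by
    intro c₁ r₁ c₂ r₂ hr₂ hr₁ hr₁1 hsub
    have hFx0 : (0:ℝ) ≤ F (1 - Real.log r₁) := by
      have := h1F (1 - Real.log r₁) (by
        have := Real.log_nonpos hr₁.le hr₁1; linarith)
      linarith
    calc F (1 - Real.log r₁) * |ballAvg f c₂ r₂ - ballAvg f c₁ r₁|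
        ≤ F (1 - Real.log r₁) * (2 * (H * (2 * r₁) ^ s)) :=
          mul_le_mul_of_nonneg_left (hpair c₁ r₁ c₂ r₂ hr₂ hr₁ hsub) hFx0
      _ = 2 * H * (F (1 - Real.log r₁) * (2 * r₁) ^ s) := by ring
      _ ≤ 2 * H * (2 * Real.exp 1 * K) :=
          mul_le_mul_of_nonneg_left (hFr r₁ hr₁ hr₁1) (by linarith)
      _ = 4 * Real.exp 1 * K * H := by ring
  constructor
  · exact ⟨hLoc, 6 * Real.exp 1 * K * H,
      fun c r hr hr1 => le_trans (hElem1 c r hr hr1) (by linarith [mul_nonneg (mul_nonneg (Real.exp_pos 1).le hK.le) hH0]),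
      fun c₁ r₁ c₂ r₂ hr₂ hr₁ hr₁1 hsub =>
        le_trans (hElem2 c₁ r₁ c₂ r₂ hr₂ hr₁ hr₁1 hsub) (by linarith [mul_nonneg (mul_nonneg (Real.exp_pos 1).le hK.le) hH0])⟩
  · have hs1' : sSup {m | ∃ c r, 0 < r ∧ r ≤ 1 ∧
        m = F (1 - Real.log r) * ⨍ y in ball c r, |f y - ballAvg f c r|}
        ≤ 2 * Real.exp 1 * K * H := by
      apply Real.sSup_le
      · rintro m ⟨c, r, hr, hr1, rfl⟩
        exact hElem1 c r hr hr1
      · positivity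
    have hs2' : sSup {m | ∃ c₁ r₁ c₂ r₂, 0 < r₂ ∧ 0 < r₁ ∧ r₁ ≤ 1 ∧
        ball c₂ (2 * r₂) ⊆ ball c₁ r₁ ∧
        m = F (1 - Real.log r₁) * |ballAvg f c₂ r₂ - ballAvg f c₁ r₁|}
        ≤ 4 * Real.exp 1 * K * H := by
      apply Real.sSup_le
      · rintro m ⟨c₁, r₁, c₂, r₂, hr₂, hr₁, hr₁1, hsub, rfl⟩
        exact hElem2 c₁ r₁ c₂ r₂ hr₂ hr₁ hr₁1 hsub
      · positivity
    have hsum : lmoFNorm F f ≤ 6 * Real.exp 1 * K * H := by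
      unfold lmoFNorm
      linarith
    calc lmoFNorm F f ≤ 6 * Real.exp 1 * K * H := hsum
      _ ≤ 6 * Real.exp 1 * K * (M + H) := by nlinarith [mul_nonneg (mul_nonneg (Real.exp_pos 1).le hK.le) hM0]
      _ = 6 * Real.exp 1 * K * (M + H) := rfl
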